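/- For every natural number N ≥ 1 and every real number a, one has ∑_{j=1}^{N} ((N−j)/N) (cos(a j) + 1) cos(a j) ≥ (N − 4)/4. -/

import Mathlib

open Finset Real

private lemma shift_sum (N : ℕ) (x : ℝ) :
    ∑ j ∈ range N, Real.cos ((N : ℝ) * x - j * x)
      = ∑ j ∈ range N, Real.cos (j * x) + Real.cos (N * x) - 1 := by
  induction N with
  | zero => simp
  | succ n ih =>
    rw [Finset.sum_range_succ' (fun j => Real.cos (((n + 1 : ℕ) : ℝ) * x - (j : ℝ) * x)) n]
    have h1 : ∀ i : ℕ, Real.cos (((n + 1 : ℕ) : ℝ) * x - ((i + 1 : ℕ) : ℝ) * x)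
        = Real.cos ((n : ℝ) * x - (i : ℝ) * x) := by
      intro i; push_cast; ring_nf
    simp only [h1]
    rw [ih, Finset.sum_range_succ]
    push_cast
    ring_nf
    simp only [mul_comm x]; ring

private lemma fejer (N : ℕ) (x : ℝ) :
    (∑ j ∈ range N, Real.cos (j * x)) ^ 2 + (∑ j ∈ range N, Real.sin (j * x)) ^ 2
      = 2 * ∑ j ∈ range N, ((N : ℝ) - j) * Real.cos (j * x) - N := by
  induction N with
  | zero => simp
  | succ n ih =>
    have hcross : ∑ j ∈ range n, Real.cos ((n : ℝ) * x - j * x)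
        = (∑ j ∈ range n, Real.cos (j * x)) * Real.cos (n * x)
          + (∑ j ∈ range n, Real.sin (j * x)) * Real.sin (n * x) := by
      rw [Finset.sum_mul, Finset.sum_mul, ← Finset.sum_add_distrib]
      exact Finset.sum_congr rfl fun j _ => by rw [Real.cos_sub]; ring
    have hsplit : ∑ j ∈ range (n + 1), (((n + 1 : ℕ) : ℝ) - j) * Real.cos (j * x)
        = ∑ j ∈ range n, ((n : ℝ) - j) * Real.cos (j * x)
          + ∑ j ∈ range n, Real.cos (j * x) + Real.cos (n * x) := by
      rw [Finset.sum_range_succ, ← Finset.sum_add_distrib]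
      push_cast
      ring_nf
      rw [add_comm]; congr 1
      · exact Finset.sum_congr rfl fun j _ => by ring
    rw [Finset.sum_range_succ, Finset.sum_range_succ, hsplit]
    have hpy := Real.sin_sq_add_cos_sq ((n : ℝ) * x)
    have hsh := shift_sum n x
    push_cast
    nlinarith [hcross, ih, hsh]

private lemma key_range (N : ℕ) (x : ℝ) :
    (N : ℝ) / 2 ≤ ∑ j ∈ range N, ((N : ℝ) - j) * Real.cos (j * x) := by
  have h := fejer N x
  nlinarith [sq_nonneg (∑ j ∈ range N, Real.cos (j * x)),
    sq_nonneg (∑ j ∈ range N, Real.sin (j * x))]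

private lemma key_Icc (N : ℕ) (hN : 1 ≤ N) (x : ℝ) :
    -((N : ℝ) / 2) ≤ ∑ j ∈ Finset.Icc 1 N, ((N : ℝ) - j) * Real.cos (x * j) := by
  have hrel : ∑ j ∈ Finset.Icc 1 N, ((N : ℝ) - j) * Real.cos (x * j)
      = ∑ j ∈ range N, ((N : ℝ) - j) * Real.cos (j * x) - N := by
    have h1 : ∑ j ∈ range (N + 1), ((N : ℝ) - j) * Real.cos (x * j)
        = ∑ j ∈ range N, ((N : ℝ) - j) * Real.cos (x * j)
          + ((N : ℝ) - N) * Real.cos (x * N) := Finset.sum_range_succ _ _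
    have h2 : Finset.range (N + 1) = insert 0 (Finset.Icc 1 N) := by
      ext j; simp; omega
    rw [h2, Finset.sum_insert (by simp)] at h1
    simp only [Nat.cast_zero, mul_zero, Real.cos_zero, sub_zero, mul_one, sub_self,
      zero_mul, add_zero] at h1
    have h4 : ∑ j ∈ range N, ((N : ℝ) - j) * Real.cos (x * j)
        = ∑ j ∈ range N, ((N : ℝ) - j) * Real.cos (j * x) :=
      Finset.sum_congr rfl fun j _ => by rw [mul_comm x]
    linarith [h1, h4.symm]
  rw [hrel]
  have := key_range N x
  linarith

private lemma gauss (N : ℕ) :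
    ∑ j ∈ Finset.Icc 1 N, ((N : ℝ) - j) = (N : ℝ) * ((N : ℝ) - 1) / 2 := by
  induction N with
  | zero => simp
  | succ n ih =>
    rw [Finset.sum_Icc_succ_top (by omega : 1 ≤ n + 1)]
    have : ∑ j ∈ Finset.Icc 1 n, (((n + 1 : ℕ) : ℝ) - j)
        = ∑ j ∈ Finset.Icc 1 n, (((n : ℝ) - j) + 1) :=
      Finset.sum_congr rfl fun j _ => by push_cast; ring
    rw [this, Finset.sum_add_distrib, ih, Finset.sum_const, Nat.card_Icc]
    push_cast
    ring_nf

/-- Core inequality behind part (3) of Lemma 3.4: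
`∑_{j=1}^{N} ((N−j)/N)(cos(aj) + 1) cos(aj) ≥ (N − 4)/4`. -/
theorem stmt_7 (N : ℕ) (hN : 1 ≤ N) (a : ℝ) :
    ((N : ℝ) - 4) / 4 ≤ ∑ j ∈ Finset.Icc 1 N,
      (((N : ℝ) - j) / N) * (Real.cos (a * j) + 1) * Real.cos (a * j) := by
  have hN0 : (0 : ℝ) < N := by exact_mod_cast Nat.pos_of_ne_zero (by omega)
  rw [← mul_le_mul_iff_right₀ hN0]
  have hexp : (N : ℝ) * ∑ j ∈ Finset.Icc 1 N,
        (((N : ℝ) - j) / N) * (Real.cos (a * j) + 1) * Real.cos (a * j)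
      = (∑ j ∈ Finset.Icc 1 N, ((N : ℝ) - j) * Real.cos ((2 * a) * j)) / 2
        + ∑ j ∈ Finset.Icc 1 N, ((N : ℝ) - j) * Real.cos (a * j)
        + (∑ j ∈ Finset.Icc 1 N, ((N : ℝ) - j)) / 2 := by
    rw [Finset.mul_sum, Finset.sum_div, Finset.sum_div, ← Finset.sum_add_distrib,
      ← Finset.sum_add_distrib]
    refine Finset.sum_congr rfl fun j _ => ?_
    have h2 : Real.cos ((2 * a) * j) = 2 * Real.cos (a * j) ^ 2 - 1 := by
      rw [show (2 * a) * (j : ℝ) = 2 * (a * j) by ring, Real.cos_two_mul]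
    rw [h2]
    field_simp
    ring
  rw [hexp]
  have b1 := key_Icc N hN a
  have b2 := key_Icc N hN (2 * a)
  have b3 := gauss N
  nlinarith [hN0, b1, b2, b3]
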